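/- Let k ≥ 2, L > 0, A > 1, M > 0, and let a₁, b₁ and a₂, …, a_k be nonnegative reals with a₁ > 0. Assume a₁ ≥ 2A², b₁ ≥ 4LM√(k-1) + 2a₁L, and √(a₁)√(a_i) ≤ 2M for all 2 ≤ i ≤ k. Then -2a₁L + b₁ ≥ 2A √((1/(4a₁))(-2a₁L + b₁)² + Σ_{i=2}^k a_i L²) > 0. -/

import Mathlib

set_option maxHeartbeats 800000


open Finset

/-- If `a₁ ≥ 2A²`, `b₁ ≥ 4LM√(k-1) + 2a₁L` and `√a₁ √aᵢ ≤ 2M` for `2 ≤ i ≤ k`,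
then `-2a₁L + b₁ ≥ 2A √((1/(4a₁))(-2a₁L + b₁)² + Σ_{i=2}^k aᵢ L²) > 0`. -/
theorem coeff_conditions_imply_system (k : ℕ) (hk : 2 ≤ k) (L A M : ℝ)
    (hL : 0 < L) (hA : 1 < A) (hM : 0 < M)
    (a : Fin k → ℝ) (b₁ : ℝ)
    (ha1 : 0 < a ⟨0, by omega⟩) (hai : ∀ i : Fin k, i ≠ ⟨0, by omega⟩ → 0 ≤ a i)
    (hb1 : 0 ≤ b₁)
    (ha1A : a ⟨0, by omega⟩ ≥ 2 * A ^ 2)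
    (hb1L : b₁ ≥ 4 * L * M * Real.sqrt ((k : ℝ) - 1) + 2 * a ⟨0, by omega⟩ * L)
    (haiM : ∀ i : Fin k, i ≠ ⟨0, by omega⟩ →
      Real.sqrt (a ⟨0, by omega⟩) * Real.sqrt (a i) ≤ 2 * M) :
    -2 * a ⟨0, by omega⟩ * L + b₁ ≥
        2 * A * Real.sqrt (1 / (4 * a ⟨0, by omega⟩) * (-2 * a ⟨0, by omega⟩ * L + b₁) ^ 2 +
          ∑ i ∈ Finset.univ.erase (⟨0, by omega⟩ : Fin k), a i * L ^ 2) ∧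
      0 < 2 * A * Real.sqrt (1 / (4 * a ⟨0, by omega⟩) * (-2 * a ⟨0, by omega⟩ * L + b₁) ^ 2 +
          ∑ i ∈ Finset.univ.erase (⟨0, by omega⟩ : Fin k), a i * L ^ 2) := by
  have hA0 : 0 < A := by linarith
  set i0 : Fin k := ⟨0, by omega⟩ with hi0
  set c : ℝ := -2 * a i0 * L + b₁ with hcdef
  set S : ℝ := ∑ i ∈ Finset.univ.erase i0, a i * L ^ 2 with hSdef
  have hk1 : (1:ℝ) ≤ (k:ℝ) - 1 := by
    have : (2:ℝ) ≤ (k:ℝ) := by exact_mod_cast hk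
    linarith
  have hsqrtk1 : (1:ℝ) ≤ Real.sqrt ((k:ℝ) - 1) := by
    have h := Real.sqrt_le_sqrt hk1
    rwa [Real.sqrt_one] at h
  have hsq : Real.sqrt ((k:ℝ) - 1) ^ 2 = (k:ℝ) - 1 := Real.sq_sqrt (by linarith)
  have hcge : 4 * L * M * Real.sqrt ((k:ℝ) - 1) ≤ c := by
    rw [hcdef]; linarith
  have hcpos : 0 < c := by
    have h4 : 4 * L * M * 1 ≤ 4 * L * M * Real.sqrt ((k:ℝ) - 1) :=
      mul_le_mul_of_nonneg_left hsqrtk1 (by positivity)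
    nlinarith [mul_pos hL hM]
  have hcsq : 16 * L ^ 2 * M ^ 2 * ((k:ℝ) - 1) ≤ c ^ 2 := by
    have hnn : (0:ℝ) ≤ 4 * L * M * Real.sqrt ((k:ℝ) - 1) := by positivity
    have := mul_self_le_mul_self hnn hcge
    nlinarith [hsq]
  have hSnonneg : 0 ≤ S := by
    apply Finset.sum_nonneg
    intro i hi
    have hi' : i ≠ i0 := (Finset.mem_erase.mp hi).1
    have := hai i hi'
    positivity
  have hcard : ((Finset.univ.erase i0).card : ℝ) = (k:ℝ) - 1 := by
    rw [Finset.card_erase_of_mem (Finset.mem_univ _), Finset.card_univ, Fintype.card_fin]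
    have : 1 ≤ k := by omega
    push_cast [this]
    ring
  have hSle : S * a i0 ≤ ((k:ℝ) - 1) * (4 * M ^ 2 * L ^ 2) := by
    have hbound : ∀ i ∈ Finset.univ.erase i0, a i * L ^ 2 ≤ 4 * M ^ 2 / a i0 * L ^ 2 := by
      intro i hi
      have hi' : i ≠ i0 := (Finset.mem_erase.mp hi).1
      have hain : 0 ≤ a i := hai i hi'
      have h := haiM i hi'
      have h2 : a i0 * a i ≤ 4 * M ^ 2 := by
        have e1 := Real.sq_sqrt ha1.le
        have e2 := Real.sq_sqrt hain
        have hp := mul_self_le_mul_self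
          (mul_nonneg (Real.sqrt_nonneg (a i0)) (Real.sqrt_nonneg (a i))) h
        nlinarith [hp]
      have h3 : a i ≤ 4 * M ^ 2 / a i0 := by
        rw [le_div_iff₀ ha1]; nlinarith
      nlinarith [sq_nonneg L]
    have hsum : S ≤ (Finset.univ.erase i0).card • (4 * M ^ 2 / a i0 * L ^ 2) :=
      Finset.sum_le_card_nsmul _ _ _ hbound
    rw [nsmul_eq_mul, hcard] at hsum
    have : ((k:ℝ) - 1) * (4 * M ^ 2 / a i0 * L ^ 2) * a i0 = ((k:ℝ) - 1) * (4 * M ^ 2 * L ^ 2) := by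
      field_simp
    nlinarith
  have key : 4 * A ^ 2 * (1 / (4 * a i0) * c ^ 2 + S) ≤ c ^ 2 := by
    have h : 4 * A ^ 2 * (1 / (4 * a i0) * c ^ 2 + S) * a i0 ≤ c ^ 2 * a i0 := by
      have e : 4 * A ^ 2 * (1 / (4 * a i0) * c ^ 2 + S) * a i0
          = A ^ 2 * c ^ 2 + 4 * A ^ 2 * (S * a i0) := by
        field_simp
      rw [e]
      have h1 : 4 * A ^ 2 * (S * a i0) ≤ 4 * A ^ 2 * (((k:ℝ) - 1) * (4 * M ^ 2 * L ^ 2)) :=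
        mul_le_mul_of_nonneg_left hSle (by positivity)
      have h2 : A ^ 2 * (16 * L ^ 2 * M ^ 2 * ((k:ℝ) - 1)) ≤ A ^ 2 * c ^ 2 :=
        mul_le_mul_of_nonneg_left hcsq (by positivity)
      have h3 : 2 * A ^ 2 * c ^ 2 ≤ a i0 * c ^ 2 :=
        mul_le_mul_of_nonneg_right ha1A (sq_nonneg c)
      nlinarith [h1, h2, h3]
    exact le_of_mul_le_mul_right h ha1
  have hinnerpos : 0 < 1 / (4 * a i0) * c ^ 2 + S := by
    have : 0 < 1 / (4 * a i0) * c ^ 2 := by positivity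
    linarith
  constructor
  · have heq : 2 * A * Real.sqrt (1 / (4 * a i0) * c ^ 2 + S)
        = Real.sqrt (4 * A ^ 2 * (1 / (4 * a i0) * c ^ 2 + S)) := by
      rw [show 4 * A ^ 2 * (1 / (4 * a i0) * c ^ 2 + S)
          = (2 * A) ^ 2 * (1 / (4 * a i0) * c ^ 2 + S) by ring,
        Real.sqrt_mul (by positivity), Real.sqrt_sq (by positivity)]
    rw [ge_iff_le, heq]
    calc Real.sqrt (4 * A ^ 2 * (1 / (4 * a i0) * c ^ 2 + S))
        ≤ Real.sqrt (c ^ 2) := Real.sqrt_le_sqrt key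
      _ = c := by rw [Real.sqrt_sq hcpos.le]
  · positivity
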